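/- Let ε be the sl3 quadrilateral exchange matrix, ε' the flipped sl3 quadrilateral exchange matrix, and m the quadrilateral Goncharov–Shen modification matrix. Set ε⁽¹⁾ := μ₁(ε), ε⁽²⁾ := μ₃(ε⁽¹⁾), ε⁽³⁾ := μ₄(ε⁽²⁾). Let F := μ^T_{2,ε⁽³⁾} ∘ μ^T_{4,ε⁽²⁾} ∘ μ^T_{3,ε⁽¹⁾} ∘ μ^T_{1,ε} be the composite of tropical X-mutations realizing the flip, and G := μ^{aT}_{2,ε⁽³⁾} ∘ μ^{aT}_{4,ε⁽²⁾} ∘ μ^{aT}_{3,ε⁽¹⁾} ∘ μ^{aT}_{1,ε} the corresponding composite of tropical A-mutations. Let P, P' : ℚ¹² → ℚ¹² be the linear maps P(a)_i = Σ_j (ε + m)_{ij} a_j and P'(a)_i = Σ_j (ε' + m)_{ij} a_j. Then F ∘ P = P' ∘ G. -/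

import Mathlib

set_option maxHeartbeats 4000000


namespace SL3

/-- `[x]_+ := max(0,x)` for rationals. -/
def pos (x : ℚ) : ℚ := max 0 x

/-- `[x,y,z]_+ := max(0, x, x+y, x+y+z)` for rationals. -/
def pos3 (x y z : ℚ) : ℚ := max (max 0 x) (max (x + y) (x + y + z))

/-- Matrix mutation in direction `k`. -/
def mutate {I : Type*} [DecidableEq I] (ε : Matrix I I ℚ) (k : I) : Matrix I I ℚ :=
  Matrix.of fun i j =>
    if i = k ∨ j = k then -ε i j
    else ε i j + (1 / 2) * (ε i k * |ε k j| + |ε i k| * ε k j)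

/-- The tropical cluster X-mutation `μ^T_{k,ε}`. -/
def xMut {I : Type*} [DecidableEq I] (ε : Matrix I I ℚ) (k : I) (x : I → ℚ) : I → ℚ :=
  fun i => if i = k then -x k
    else x i + pos (-(ε i k)) * pos (x k) - pos (ε i k) * pos (-(x k))

/-- The tropical cluster A-mutation `μ^{aT}_{k,ε}`. -/
def aMut {I : Type*} [Fintype I] [DecidableEq I] (ε : Matrix I I ℚ) (k : I) (a : I → ℚ) :
    I → ℚ :=
  fun i => if i = k then
      -a k + max (∑ j, pos (ε k j) * a j) (∑ j, pos (-(ε k j)) * a j)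
    else a i

/-- Pairs `(a,b)` (0-indexed) with entry `1` in the sl3 quadrilateral exchange matrix. -/
def quadOnes : List (Fin 12 × Fin 12) :=
  [(0,3),(0,4),(1,0),(1,5),(1,7),(2,1),(2,8),(3,2),(3,9),(3,11),(4,1),(5,6),(6,1),(7,2),
   (8,3),(9,10),(10,3),(11,0)]

/-- Pairs `(a,b)` (0-indexed) with entry `1/2` in the sl3 quadrilateral exchange matrix. -/
def quadHalves : List (Fin 12 × Fin 12) := [(5,4),(7,6),(9,8),(11,10)]

/-- The sl3 quadrilateral exchange matrix (0-indexed: paper's vertex `i` is index `i-1`). -/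
def epsQuad : Matrix (Fin 12) (Fin 12) ℚ :=
  Matrix.of fun i j =>
    if (i, j) ∈ quadOnes then 1
    else if (j, i) ∈ quadOnes then -1
    else if (i, j) ∈ quadHalves then 1 / 2
    else if (j, i) ∈ quadHalves then -(1 / 2)
    else 0

/-- Pairs `(a,b)` (0-indexed) with entry `1` in the flipped sl3 quadrilateral
exchange matrix. -/
def quadOnes' : List (Fin 12 × Fin 12) :=
  [(0,3),(0,5),(0,11),(1,0),(1,6),(2,1),(2,7),(2,9),(3,2),(3,10),(4,0),(5,1),(6,2),(7,8),
   (8,2),(9,3),(10,0),(11,4)]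

/-- The flipped sl3 quadrilateral exchange matrix. -/
def epsQuad' : Matrix (Fin 12) (Fin 12) ℚ :=
  Matrix.of fun i j =>
    if (i, j) ∈ quadOnes' then 1
    else if (j, i) ∈ quadOnes' then -1
    else if (i, j) ∈ quadHalves then 1 / 2
    else if (j, i) ∈ quadHalves then -(1 / 2)
    else 0

/-- The quadrilateral Goncharov–Shen modification matrix `m`. -/
def mQuad : Matrix (Fin 12) (Fin 12) ℚ :=
  Matrix.of fun i j =>
    if i = j ∧ 4 ≤ (i : ℕ) then -1
    else if (i, j) ∈ ([(4,5),(6,7),(8,9),(10,11)] : List (Fin 12 × Fin 12)) ∨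
            (j, i) ∈ ([(4,5),(6,7),(8,9),(10,11)] : List (Fin 12 × Fin 12)) then 1 / 2
    else 0

/-- The Goncharov–Shen extended ensemble map intertwines the composite `G` of tropical
A-mutations and the composite `F` of tropical X-mutations realizing the flip of the
diagonal of the quadrilateral: `F ∘ P = P' ∘ G`. -/
def onesEA : List (Fin 12 × Fin 12) :=
  [(0,1),(0,11),(1,3),(1,5),(1,7),(2,1),(2,8),(3,0),(3,2),(3,9),(4,0),(5,6),(6,1),(7,2),(8,3),(9,10),(10,3),(11,4)]
def EA : Matrix (Fin 12) (Fin 12) ℚ :=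
  Matrix.of fun i j =>
    if (i, j) ∈ onesEA then 1
    else if (j, i) ∈ onesEA then -1
    else if (i, j) ∈ quadHalves then 1 / 2
    else if (j, i) ∈ quadHalves then -(1 / 2)
    else 0

def onesEB : List (Fin 12 × Fin 12) :=
  [(0,1),(0,11),(1,2),(1,5),(2,3),(2,7),(3,0),(3,9),(4,0),(5,6),(6,1),(7,8),(8,2),(9,10),(10,3),(11,4)]
def EB : Matrix (Fin 12) (Fin 12) ℚ :=
  Matrix.of fun i j =>
    if (i, j) ∈ onesEB then 1
    else if (j, i) ∈ onesEB then -1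
    else if (i, j) ∈ quadHalves then 1 / 2
    else if (j, i) ∈ quadHalves then -(1 / 2)
    else 0

def onesEC : List (Fin 12 × Fin 12) :=
  [(0,1),(0,3),(0,11),(1,2),(1,5),(2,0),(2,7),(2,9),(3,2),(3,10),(4,0),(5,6),(6,1),(7,8),(8,2),(9,3),(10,0),(11,4)]
def EC : Matrix (Fin 12) (Fin 12) ℚ :=
  Matrix.of fun i j =>
    if (i, j) ∈ onesEC then 1
    else if (j, i) ∈ onesEC then -1
    else if (i, j) ∈ quadHalves then 1 / 2
    else if (j, i) ∈ quadHalves then -(1 / 2)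
    else 0


/-- Expansion of a sum over `Fin 12`. -/
theorem sum12 (f : Fin 12 → ℚ) : ∑ j, f j =
    f 0 + f 1 + f 2 + f 3 + f 4 + f 5 + f 6 + f 7 + f 8 + f 9 + f 10 + f 11 := by
  simp [Fin.sum_univ_succ]
  ring_nf

theorem hEA : mutate epsQuad 0 = EA := by
  ext i j
  fin_cases i <;> fin_cases j <;>
    simp (config := { decide := true }) only [mutate, epsQuad, EA, quadOnes, quadHalves,
      onesEA, Matrix.of_apply, List.mem_cons, List.not_mem_nil, Prod.mk.injEq,
      if_true, if_false, ite_true, ite_false] <;> norm_num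

theorem hEB : mutate EA 2 = EB := by
  ext i j
  fin_cases i <;> fin_cases j <;>
    simp (config := { decide := true }) only [mutate, EA, EB, quadHalves,
      onesEA, onesEB, Matrix.of_apply, List.mem_cons, List.not_mem_nil, Prod.mk.injEq,
      if_true, if_false, ite_true, ite_false] <;> norm_num

theorem hEC : mutate EB 3 = EC := by
  ext i j
  fin_cases i <;> fin_cases j <;>
    simp (config := { decide := true }) only [mutate, EB, EC, quadHalves,
      onesEB, onesEC, Matrix.of_apply, List.mem_cons, List.not_mem_nil, Prod.mk.injEq,
      if_true, if_false, ite_true, ite_false] <;> norm_num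

theorem posEq {x u v : ℚ} (h : x = u - v) : max 0 x = max u v - v := by
  rcases le_total u v with h' | h'
  · rw [max_eq_left (by linarith : x ≤ 0), max_eq_right h']
    linarith
  · rw [max_eq_right (by linarith : (0:ℚ) ≤ x), max_eq_left h']
    linarith

theorem posEq' {x u v : ℚ} (h : x = v - u) : max 0 x = max u v - u := by
  rw [max_comm u v]; exact posEq h

set_option maxHeartbeats 4000000 in
theorem flip_ensemble_intertwines (a : Fin 12 → ℚ) :
    xMut (mutate (mutate (mutate epsQuad 0) 2) 3) 1
      (xMut (mutate (mutate epsQuad 0) 2) 3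
        (xMut (mutate epsQuad 0) 2
          (xMut epsQuad 0 (fun i => ∑ j, (epsQuad i j + mQuad i j) * a j)))) =
    fun i => ∑ j, (epsQuad' i j + mQuad i j) *
      (aMut (mutate (mutate (mutate epsQuad 0) 2) 3) 1
        (aMut (mutate (mutate epsQuad 0) 2) 3
          (aMut (mutate epsQuad 0) 2
            (aMut epsQuad 0 a))) j) := by
  rw [hEA, hEB, hEC]
  funext i
  have m0 : max (0:ℚ) (-a 1 + a 3 + a 4 + -a 11)
      = max (a 3 + a 4) (a 1 + a 11) - (a 1 + a 11) := posEq (by ring)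
  have m0n : max (0:ℚ) (a 11 + (-a 4 + (-a 3 + a 1)))
      = max (a 3 + a 4) (a 1 + a 11) - (a 3 + a 4) := posEq' (by ring)
  have m2 : max (0:ℚ) (a 1 + -a 3 + -a 7 + a 8)
      = max (a 1 + a 8) (a 3 + a 7) - (a 3 + a 7) := posEq (by ring)
  have m2n : max (0:ℚ) (-a 8 + (a 7 + (a 3 + -a 1)))
      = max (a 1 + a 8) (a 3 + a 7) - (a 1 + a 8) := posEq' (by ring)
  have m3 : max (0:ℚ) (-a 0 + a 2 + -a 8 + a 9 + -a 10 + a 11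
        + max 0 (-a 1 + a 3 + a 4 + -a 11) - max 0 (-a 8 + (a 7 + (a 3 + -a 1))))
      = max (-a 0 + max (a 3 + a 4) (a 1 + a 11) + a 9)
          (-a 2 + max (a 1 + a 8) (a 3 + a 7) + a 10)
        - (-a 2 + max (a 1 + a 8) (a 3 + a 7) + a 10) := by
    refine posEq ?_
    rw [m0, m2n]; ring
  have m3n : max (0:ℚ) (max 0 (-a 8 + (a 7 + (a 3 + -a 1)))
        - (-a 0 + a 2 + -a 8 + a 9 + -a 10 + a 11 + max 0 (-a 1 + a 3 + a 4 + -a 11)))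
      = max (-a 0 + max (a 3 + a 4) (a 1 + a 11) + a 9)
          (-a 2 + max (a 1 + a 8) (a 3 + a 7) + a 10)
        - (-a 0 + max (a 3 + a 4) (a 1 + a 11) + a 9) := by
    refine posEq' ?_
    rw [m0, m2n]; ring
  have m1 : max (0:ℚ) (a 0 + -a 2 + -a 4 + a 5 + -a 6 + a 7
        - max 0 (a 11 + (-a 4 + (-a 3 + a 1))) + max 0 (a 1 + -a 3 + -a 7 + a 8))
      = max (-a 2 + max (a 1 + a 8) (a 3 + a 7) + a 5)
          (-a 0 + max (a 3 + a 4) (a 1 + a 11) + a 6)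
        - (-a 0 + max (a 3 + a 4) (a 1 + a 11) + a 6) := by
    refine posEq ?_
    rw [m0n, m2]; ring
  have m1n : max (0:ℚ) (-(max 0 (a 1 + -a 3 + -a 7 + a 8))
        + (max 0 (a 11 + (-a 4 + (-a 3 + a 1)))
          - (a 0 + -a 2 + -a 4 + a 5 + -a 6 + a 7)))
      = max (-a 2 + max (a 1 + a 8) (a 3 + a 7) + a 5)
          (-a 0 + max (a 3 + a 4) (a 1 + a 11) + a 6)
        - (-a 2 + max (a 1 + a 8) (a 3 + a 7) + a 5) := by
    refine posEq' ?_
    rw [m0n, m2]; ring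
  fin_cases i <;>
    (simp (config := { decide := true }) only [sum12, xMut, aMut, pos, EA, EB, EC, epsQuad,
      epsQuad', mQuad, quadOnes, quadOnes', quadHalves, onesEA, onesEB, onesEC,
      Matrix.of_apply, List.mem_cons, List.not_mem_nil, Prod.mk.injEq,
      if_true, if_false, ite_true, ite_false]
     try norm_num
     (try rw [m3]); (try rw [m3n]); (try rw [m1]); (try rw [m1n])
     (try rw [m0]); (try rw [m0n]); (try rw [m2]); (try rw [m2n])
     ring)

end SL3
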